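/- For every integer n ≥ 4, the set 𝓔 is stable under σ and under ψ: if p ∈ 𝓔 then σ(p) ∈ 𝓔 and ψ(p) ∈ 𝓔. Here σ is the automorphism of ℤ^{3n−1} exchanging a_1 with b_2 and a_2 with b_1 and fixing the other coordinates, and ψ sends p to p′ with a′_k = a_{n+1−k} (1 ≤ k ≤ n), b′_k = b_{n+2−k} (2 ≤ k ≤ n), b′_1 = a_{n−1} + b_n − c_n, c′_k = a_{n+2−k} + b_{n+2−k} + c_{n+1−k} − b_{n+1−k} − a_{n−k} (2 ≤ k ≤ n−1), c′_n = a_2 + b_2 − b_1. -/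
import Mathlib


open MeasureTheory Finset
open scoped ENNReal

noncomputable section

/-- Membership in the set `ℰ`, in terms of the components of `p`. -/
def memE (n : ℕ) (a b c : ℕ → ℤ) : Prop :=
  (∀ k, 2 ≤ k → k ≤ n - 1 → c k = 0) ∧
  (n = 3 → a 1 + b 2 = a 3 + b 3) ∧
  (4 ≤ n → a 2 = b 1 ∧ b n = c n ∧
    ∀ k, 1 ≤ k → k ≤ n - 2 → a k + b (k + 1) = a (k + 2) + b (k + 2))

theorem stmt14 (n : ℕ) (hn : 4 ≤ n) (a b c : ℕ → ℤ) (hp : memE n a b c) :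
    memE n (fun k => if k = 1 then b 2 else if k = 2 then b 1 else a k)
      (fun k => if k = 1 then a 2 else if k = 2 then a 1 else b k) c ∧
    memE n (fun k => a (n + 1 - k))
      (fun k => if k = 1 then a (n - 1) + b n - c n else b (n + 2 - k))
      (fun k => if k = n then a 2 + b 2 - b 1
        else a (n + 2 - k) + b (n + 2 - k) + c (n + 1 - k) - b (n + 1 - k) - a (n - k)) := by
  obtain ⟨h0, -, h4⟩ := hp
  obtain ⟨hab, hbc, hrec⟩ := h4 hn
  constructor
  · refine ⟨h0, fun h3 => absurd h3 (by omega), fun _ => ⟨?_, ?_, ?_⟩⟩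
    · simp only [if_neg (show (2:ℕ) ≠ 1 by omega), if_pos rfl]
      omega
    · beta_reduce
      rw [if_neg (show ¬ n = 1 by omega), if_neg (show ¬ n = 2 by omega)]
      exact hbc
    · intro k hk1 hk2
      rcases eq_or_ne k 1 with rfl | h1
      · have := hrec 1 (by omega) (by omega)
        norm_num at this ⊢
        omega
      rcases eq_or_ne k 2 with rfl | h2
      · have := hrec 2 (by omega) (by omega)
        norm_num at this ⊢
        omega
      · beta_reduce
        simp only [if_neg h1, if_neg h2, if_neg (show k+1 ≠ 1 by omega),
          if_neg (show k+1 ≠ 2 by omega), if_neg (show k+2 ≠ 1 by omega),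
          if_neg (show k+2 ≠ 2 by omega)]
        exact hrec k hk1 hk2
  · refine ⟨?_, fun h3 => absurd h3 (by omega), fun _ => ⟨?_, ?_, ?_⟩⟩
    · intro k hk1 hk2
      beta_reduce
      rw [if_neg (show ¬ k = n by omega),
        show n + 1 - k = n - k + 1 by omega, show n + 2 - k = n - k + 2 by omega]
      have h1 := hrec (n - k) (by omega) (by omega)
      have h2 := h0 (n - k + 1) (by omega) (by omega)
      omega
    · beta_reduce
      rw [if_pos rfl, show n + 1 - 2 = n - 1 by omega]
      omega
    · beta_reduce
      rw [if_neg (show ¬ n = 1 by omega), if_pos rfl, show n + 2 - n = 2 by omega]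
      omega
    · intro k hk1 hk2
      beta_reduce
      rw [if_neg (show ¬ k + 1 = 1 by omega), if_neg (show ¬ k + 2 = 1 by omega),
        show n + 2 - (k + 1) = n - 1 - k + 2 by omega,
        show n + 1 - k = n - 1 - k + 2 by omega,
        show n + 1 - (k + 2) = n - 1 - k by omega,
        show n + 2 - (k + 2) = n - 1 - k + 1 by omega]
      have := hrec (n - 1 - k) (by omega) (by omega)
      omega

end
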